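/- Suppose counters are updated by a sequence of operations, each either an addition of a value in {-1,0,+1} or an assignment (:= v for fixed v), where the operation applied at step t depends only on the k-window of input ending at t. If two input strings have equal multisets of k-windows, and additionally every window triggering an assignment to a given counter occurs in a common suffix shared by both strings (after which the counters evolve identically), then the final value of every counter is the same on both strings. -/

import Mathlib

/-- A counter operation: either add a value or assign a fixed value. -/
inductive CtrOp : Type
  | add (d : ℚ) : CtrOp
  | assign (v : ℚ) : CtrOp

/-- Apply a counter operation to the current counter value. -/
def CtrOp.apply (o : CtrOp) (c : ℚ) : ℚ :=
  match o with
  | CtrOp.add d => c + d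
  | CtrOp.assign v => v

/-- The `k`-window of `x` ending at position `t` (0-indexed, inclusive; shorter,
i.e. padded, near the left edge). -/
def window {α : Type} (k : ℕ) (x : List α) (t : ℕ) : List α :=
  (x.take (t + 1)).drop (t + 1 - k)

/-- The multiset of all `k`-windows of `x`. -/
def windows {α : Type} (k : ℕ) (x : List α) : Multiset (List α) :=
  ((List.range x.length).map (window k x) : List (List α))

/-- Run the counter (starting at 0) on `x`, applying at each step `t` the operation
determined by the `k`-window of `x` ending at `t`. -/
def runCtr {α : Type} (k : ℕ) (op : List α → CtrOp) (x : List α) : ℚ :=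
  (List.range x.length).foldl (fun c t => (op (window k x t)).apply c) 0

/-- Additive value of an operation (0 for assignments). -/
def fval (o : CtrOp) : ℚ := match o with | .add d => d | .assign _ => 0

/-- Whether an operation is an assignment. -/
def isAsg (o : CtrOp) : Bool := match o with | .add _ => false | .assign _ => true

lemma isAsg_iff (o : CtrOp) : isAsg o = true ↔ ∃ v, o = CtrOp.assign v := by
  cases o <;> simp [isAsg]

lemma foldl_adds (g : ℕ → CtrOp) (l : List ℕ) (c : ℚ)
    (h : ∀ t ∈ l, isAsg (g t) = false) :
    l.foldl (fun c t => (g t).apply c) c = c + (l.map (fun t => fval (g t))).sum := by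
  induction l generalizing c with
  | nil => simp
  | cons a l ih =>
    have ha := h a (by simp)
    cases hg : g a with
    | add d =>
      rw [List.foldl_cons]
      have e : (g a).apply c = c + d := by rw [hg]; rfl
      rw [e, ih _ (fun t ht => h t (by simp [ht])), List.map_cons, List.sum_cons]
      simp only [hg, fval]
      ring
    | assign v => simp [isAsg, hg] at ha

lemma foldl_last_assign (g : ℕ → CtrOp) (n L : ℕ) (v : ℚ) (hL : L < n)
    (hgl : g L = CtrOp.assign v)
    (h : ∀ t, L < t → t < n → isAsg (g t) = false) :
    (List.range n).foldl (fun c t => (g t).apply c) 0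
      = v + ((List.range' (L+1) (n-L-1)).map (fun t => fval (g t))).sum := by
  have hsplit : List.range n = List.range (L+1) ++ List.range' (L+1) (n-L-1) := by
    rw [List.range_eq_range', List.range_eq_range' (n := L+1)]
    have := List.range'_append (s := 0) (m := L+1) (n := n-L-1) (step := 1)
    simp only [one_mul, zero_add] at this
    rw [this]
    congr 1; omega
  rw [hsplit, List.foldl_append]
  have h1 : (List.range (L+1)).foldl (fun c t => (g t).apply c) 0 = v := by
    rw [List.range_succ, List.foldl_append]
    simp [hgl, CtrOp.apply]
  rw [h1, foldl_adds]
  intro t ht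
  have := List.mem_range'_1.mp ht
  exact h t (by omega) (by omega)

/-- The key lemma of the suffix attack: if the operation at step `t` depends only on
the `k`-window ending at `t`, all additive updates lie in `{-1, 0, +1}`, the two
strings have the same length and equal multisets of `k`-windows, the windows at all
positions of a common final region agree between the two strings, and every window
triggering an assignment also occurs (in each string) in that common region, then
the final counter values on the two strings coincide. -/
theorem stmt_15 {α : Type} (k : ℕ) (op : List α → CtrOp)
    (hadd : ∀ (w : List α) (d : ℚ), op w = CtrOp.add d → d ∈ ({-1, 0, 1} : Set ℚ))
    (x y : List α) (hlen : x.length = y.length)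
    (hmult : windows k x = windows k y)
    (T : ℕ)
    (hsuf : ∀ t : ℕ, T ≤ t → t < x.length → window k x t = window k y t)
    (hax : ∀ t : ℕ, t < x.length → (∃ v, op (window k x t) = CtrOp.assign v) →
      ∃ t' : ℕ, T ≤ t' ∧ t' < x.length ∧ window k x t' = window k x t)
    (hay : ∀ t : ℕ, t < y.length → (∃ v, op (window k y t) = CtrOp.assign v) →
      ∃ t' : ℕ, T ≤ t' ∧ t' < y.length ∧ window k y t' = window k y t) :
    runCtr k op x = runCtr k op y := by
  classical
  have hwx : ∀ w, w ∈ windows k x ↔ ∃ t, t < x.length ∧ window k x t = w := by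
    intro w
    simp [windows, List.mem_map, List.mem_range]
  have hsum : ∀ (F : List α → ℚ) (z : List α),
      ((List.range z.length).map (fun t => F (window k z t))).sum
        = ((windows k z).map F).sum := by
    intro F z
    simp [windows, Multiset.map_coe, List.map_map, Function.comp_def]
  by_cases hA : ∃ t, t < x.length ∧ isAsg (op (window k x t)) = true
  · -- there is an assignment; take the last one
    obtain ⟨S, hSne⟩ : ∃ S : Finset ℕ, S = (Finset.range x.length).filter
        (fun t => isAsg (op (window k x t)) = true) := ⟨_, rfl⟩
    have hSmem : ∀ t, t ∈ S ↔ t < x.length ∧ isAsg (op (window k x t)) = true := by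
      intro t; simp [hSne, Finset.mem_filter, Finset.mem_range]
    have hne : S.Nonempty := by
      obtain ⟨t, ht1, ht2⟩ := hA
      exact ⟨t, (hSmem t).mpr ⟨ht1, ht2⟩⟩
    obtain ⟨L, hLdef⟩ : ∃ L, L = S.max' hne := ⟨_, rfl⟩
    have hLS : L ∈ S := hLdef ▸ S.max'_mem hne
    have hLn : L < x.length := ((hSmem L).mp hLS).1
    have hLA : isAsg (op (window k x L)) = true := ((hSmem L).mp hLS).2
    have hmax : ∀ t, t < x.length → isAsg (op (window k x t)) = true → t ≤ L := by
      intro t ht1 ht2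
      exact hLdef ▸ S.le_max' t ((hSmem t).mpr ⟨ht1, ht2⟩)
    obtain ⟨v, hv⟩ := (isAsg_iff _).mp hLA
    have hTL : T ≤ L := by
      obtain ⟨t', ht'1, ht'2, ht'3⟩ := hax L hLn ⟨v, hv⟩
      have : isAsg (op (window k x t')) = true := by rw [ht'3]; exact hLA
      exact le_trans ht'1 (hmax t' ht'2 this)
    have hwL : window k y L = window k x L := (hsuf L hTL hLn).symm
    have hmaxy : ∀ t, L < t → t < x.length → isAsg (op (window k y t)) = false := by
      intro t ht1 ht2
      by_contra hc
      rw [Bool.not_eq_false] at hc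
      have : window k x t = window k y t := hsuf t (by omega) ht2
      rw [← this] at hc
      exact absurd (hmax t ht2 hc) (by omega)
    have hmaxx : ∀ t, L < t → t < x.length → isAsg (op (window k x t)) = false := by
      intro t ht1 ht2
      by_contra hc
      rw [Bool.not_eq_false] at hc
      exact absurd (hmax t ht2 hc) (by omega)
    have hvy : op (window k y L) = CtrOp.assign v := by rw [hwL]; exact hv
    have hx := foldl_last_assign (fun t => op (window k x t)) x.length L v hLn hv hmaxx
    have hy := foldl_last_assign (fun t => op (window k y t)) x.length L v hLn hvy hmaxy
    rw [runCtr, runCtr, ← hlen, hx, hy]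
    congr 1
    apply congrArg
    apply List.map_congr_left
    intro t ht
    have ht' := List.mem_range'_1.mp ht
    show fval (op (window k x t)) = fval (op (window k y t))
    rw [hsuf t (by omega) (by omega)]
  · -- no assignments at all
    push_neg at hA
    have hAx : ∀ t ∈ List.range x.length, isAsg (op (window k x t)) = false := by
      intro t ht
      rw [List.mem_range] at ht
      rw [← Bool.not_eq_true]
      exact hA t ht
    have hAy : ∀ t ∈ List.range x.length, isAsg (op (window k y t)) = false := by
      intro t ht
      rw [List.mem_range] at ht
      rw [← Bool.not_eq_true]
      intro h
      have hwy : window k y t ∈ windows k y := by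
        rw [windows, Multiset.mem_coe]
        exact List.mem_map.mpr ⟨t, List.mem_range.mpr (by omega), rfl⟩
      rw [← hmult] at hwy
      obtain ⟨t', ht'1, ht'2⟩ := (hwx _).mp hwy
      have : isAsg (op (window k x t')) = true := by rw [ht'2]; exact h
      exact absurd this (hA t' ht'1)
    rw [runCtr, runCtr, ← hlen, foldl_adds _ _ _ hAx, foldl_adds _ _ _ hAy,
      zero_add, zero_add]
    have e1 := hsum (fun w => fval (op w)) x
    have e2 := hsum (fun w => fval (op w)) y
    rw [← hlen] at e2
    rw [e1, e2, hmult]
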